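/- Let G be a connected tree on n vertices and let A be an n×n complex positive semidefinite matrix that fits G, meaning for i ≠ k, A_{ik} = 0 if and only if (i,k) is not an edge of G (diagonal entries unconstrained). Then rank(A) ≥ n - 1. -/

import Mathlib

open ComplexOrder Matrix

/-- Along a walk from a vertex where `x` is nonzero to a vertex where `x` is zero,
there is an edge `(a,b)` with `x a = 0` and `x b ≠ 0`. -/
lemma exists_adj_zero_ne_zero {V : Type*} {G : SimpleGraph V} {x : V → ℂ} :
    ∀ {u v : V}, G.Walk u v → x u ≠ 0 → x v = 0 →
      ∃ a b, G.Adj a b ∧ x a = 0 ∧ x b ≠ 0 := by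
  intro u v w
  induction w with
  | nil => intro h1 h2; exact absurd h2 h1
  | @cons u m v h p ih =>
    intro h1 h2
    by_cases hm : x m = 0
    · exact ⟨m, u, h.symm, hm, h1⟩
    · exact ih hm h2

/-- If `G` is a connected tree on `n` vertices and `A` is an `n × n`
complex positive semidefinite matrix that fits `G` (for `i ≠ k`, `A i k ≠ 0` iff
`(i,k)` is an edge of `G`), then `rank(A) ≥ n - 1`. -/
theorem rank_ge_of_fits_tree
    (n : ℕ) (G : SimpleGraph (Fin n))
    (hconn : G.Connected) (hacyclic : G.IsAcyclic)
    (A : Matrix (Fin n) (Fin n) ℂ)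
    (hpsd : A.PosSemidef)
    (hfit : ∀ i k : Fin n, i ≠ k → (A i k ≠ 0 ↔ G.Adj i k)) :
    n - 1 ≤ A.rank := by
  classical
  rcases Nat.eq_zero_or_pos n with hn | hn
  · simp [hn]
  set i0 : Fin n := ⟨0, hn⟩ with hi0
  -- Key claim: any kernel vector vanishing at `i0` is zero.
  have key : ∀ x : Fin n → ℂ, A *ᵥ x = 0 → x i0 = 0 → x = 0 := by
    intro x hx hx0
    by_contra hxne
    obtain ⟨j0, hj0⟩ := Function.ne_iff.mp hxne
    have hj0 : x j0 ≠ 0 := hj0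
    obtain ⟨w⟩ := hconn j0 i0
    obtain ⟨i, j, hadj, hxi, hxj⟩ := exists_adj_zero_ne_zero w hj0 hx0
    -- the edge (i,j) is a bridge
    have hbridge := (SimpleGraph.isAcyclic_iff_forall_adj_isBridge.mp hacyclic) hadj
    rw [SimpleGraph.isBridge_iff] at hbridge
    set G' : SimpleGraph (Fin n) := G \ SimpleGraph.fromEdgeSet {s(i, j)} with hG'
    have hiS : ¬ G'.Reachable j i := fun h => hbridge h.symm
    have hjS : G'.Reachable j j := SimpleGraph.Reachable.refl j
    -- cross edges between the two sides must be exactly (j, i)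
    have cross : ∀ k l : Fin n, G'.Reachable j k → ¬ G'.Reachable j l →
        G.Adj k l → k = j ∧ l = i := by
      intro k l hk hl hkl
      by_cases he : s(k, l) = s(i, j)
      · rw [Sym2.eq_iff] at he
        rcases he with ⟨rfl, rfl⟩ | ⟨rfl, rfl⟩
        · exact absurd hk hiS
        · exact ⟨rfl, rfl⟩
      · exfalso
        apply hl
        refine hk.trans (SimpleGraph.Adj.reachable ?_)
        rw [hG', SimpleGraph.sdiff_adj, SimpleGraph.fromEdgeSet_adj]
        exact ⟨hkl, fun hh => he hh.1⟩
    -- the truncated vector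
    set y : Fin n → ℂ := fun k => if G'.Reachable j k then x k else 0 with hy
    have hyzero : star y ⬝ᵥ A *ᵥ y = 0 := by
      have hAy : A *ᵥ y = A *ᵥ (y - x) := by
        rw [Matrix.mulVec_sub, hx, sub_zero]
      rw [hAy, dotProduct]
      apply Finset.sum_eq_zero
      intro k _
      by_cases hk : G'.Reachable j k
      · have hz : (A *ᵥ (y - x)) k = 0 := by
          rw [Matrix.mulVec, dotProduct]
          apply Finset.sum_eq_zero
          intro l _
          by_cases hl : G'.Reachable j l
          · simp [hy, hl]
          · by_cases hA0 : A k l = 0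
            · simp [hA0]
            · have hkl : k ≠ l := by
                rintro rfl; exact hl hk
              obtain ⟨rfl, rfl⟩ := cross k l hk hl ((hfit k l hkl).mp hA0)
              simp [hy, hiS, hxi]
        simp [hz]
      · simp [hy, hk]
    have hAy0 : A *ᵥ y = 0 := (hpsd.dotProduct_mulVec_zero_iff y).mp hyzero
    -- evaluate at i
    have hi : (A *ᵥ y) i = A i j * x j := by
      rw [Matrix.mulVec, dotProduct]
      rw [Finset.sum_eq_single j]
      · simp [hy, hjS]
      · intro l _ hlj
        by_cases hl : G'.Reachable j l
        · by_cases hA0 : A i l = 0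
          · simp [hA0]
          · exfalso
            have hil : i ≠ l := by rintro rfl; exact hiS hl
            have : l = j ∧ i = i := cross l i hl hiS ((hfit i l hil).mp hA0).symm
            exact hlj this.1
        · simp [hy, hl]
      · intro h; exact absurd (Finset.mem_univ j) h
    have hAij : A i j ≠ 0 := (hfit i j hadj.ne).mpr hadj
    rw [hAy0] at hi
    exact (mul_ne_zero hAij hxj) hi.symm
  -- dimension count
  have hker : Module.finrank ℂ (LinearMap.ker A.mulVecLin) ≤ 1 := by
    let φ : LinearMap.ker A.mulVecLin →ₗ[ℂ] ℂ :=
      (LinearMap.proj i0).comp (Submodule.subtype _)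
    have hφ : Function.Injective φ := by
      intro a b hab
      have h1 : A *ᵥ (a.1 - b.1) = 0 := by
        have ha := a.2
        have hb := b.2
        rw [LinearMap.mem_ker, Matrix.mulVecLin_apply] at ha hb
        rw [Matrix.mulVec_sub, ha, hb, sub_zero]
      have h2 : (a.1 - b.1) i0 = 0 := by
        have : a.1 i0 = b.1 i0 := hab
        simp [this]
      have := key _ h1 h2
      exact Subtype.ext (sub_eq_zero.mp this)
    calc Module.finrank ℂ (LinearMap.ker A.mulVecLin)
        ≤ Module.finrank ℂ ℂ := LinearMap.finrank_le_finrank_of_injective hφ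
      _ = 1 := Module.finrank_self ℂ
  have hdim : A.rank + Module.finrank ℂ (LinearMap.ker A.mulVecLin) = n := by
    rw [Matrix.rank, LinearMap.finrank_range_add_finrank_ker]
    simp
  omega
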